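/- For the two-segment Gaussian mean model, the total unnormalized log-likelihood split score L(τ) = -∑_{t<τ}(y_t - ȳ_{<τ})² - ∑_{t≥τ}(y_t - ȳ_{≥τ})² applied to the noiseless piecewise-constant signal (y_t = a for t < c*, = b for t ≥ c*, a ≠ b) is uniquely maximized at τ = c*. -/
import Mathlib


/-- Sample mean of the values of `y` over the integer segment `{i,...,j}`. -/
noncomputable def segMean (y : ℤ → ℝ) (i j : ℤ) : ℝ :=
  (∑ t ∈ Finset.Icc i j, y t) / (Finset.Icc i j).card

lemma seg_const_sq_zero (y : ℤ → ℝ) (i j : ℤ) (k : ℝ) (hij : i ≤ j)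
    (hk : ∀ t ∈ Finset.Icc i j, y t = k) :
    ∑ t ∈ Finset.Icc i j, (y t - segMean y i j) ^ 2 = 0 := by
  have hne : (Finset.Icc i j).Nonempty := Finset.nonempty_Icc.2 hij
  have hcard : ((Finset.Icc i j).card : ℝ) ≠ 0 := by
    exact_mod_cast Finset.card_ne_zero_of_mem hne.choose_spec
  have hmean : segMean y i j = k := by
    unfold segMean
    rw [Finset.sum_congr rfl hk, Finset.sum_const, nsmul_eq_mul]
    exact mul_div_cancel_left₀ k hcard
  apply Finset.sum_eq_zero
  intro t ht
  rw [hk t ht, hmean]; ring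

lemma seg_two_pos (y : ℤ → ℝ) (s : Finset ℤ) (m : ℝ) (t1 t2 : ℤ)
    (h1 : t1 ∈ s) (h2 : t2 ∈ s) (hne : y t1 ≠ y t2) :
    0 < ∑ t ∈ s, (y t - m) ^ 2 := by
  have hnn : ∀ t ∈ s, (0:ℝ) ≤ (y t - m) ^ 2 := fun t _ => sq_nonneg _
  rcases lt_or_eq_of_le (Finset.sum_nonneg hnn) with h | h
  · exact h
  · exfalso
    have hz := (Finset.sum_eq_zero_iff_of_nonneg hnn).1 h.symm
    have e1 := hz t1 h1
    have e2 := hz t2 h2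
    have f1 : y t1 = m := by nlinarith [sq_nonneg (y t1 - m)]
    have f2 : y t2 = m := by nlinarith [sq_nonneg (y t2 - m)]
    exact hne (f1.trans f2.symm)

/-- Two-segment Gaussian mean model: the total unnormalized log-likelihood split score
`L(τ) = -∑_{t<τ}(y_t - ȳ_{<τ})² - ∑_{t≥τ}(y_t - ȳ_{≥τ})²` applied to the noiseless
piecewise-constant signal (`y t = a` for `t < c`, `y t = b` for `t ≥ c`, `a ≠ b`) is
uniquely maximized over `{2,...,T}` at `τ = c`. -/
theorem two_segment_split_score_unique_max (T c : ℤ) (a b : ℝ)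
    (hT : 3 ≤ T) (hc : 2 ≤ c) (hcT : c ≤ T - 1) (hab : a ≠ b)
    (y : ℤ → ℝ) (hy : y = fun t => if t < c then a else b)
    (L : ℤ → ℝ)
    (hL : L = fun τ =>
      -(∑ t ∈ Finset.Icc 1 (τ - 1), (y t - segMean y 1 (τ - 1)) ^ 2) -
        ∑ t ∈ Finset.Icc τ T, (y t - segMean y τ T) ^ 2) :
    ∀ τ ∈ Set.Icc (2 : ℤ) T, τ ≠ c → L τ < L c := by
  intro τ hτ hτc
  obtain ⟨hτ2, hτT⟩ := hτ
  have hya : ∀ t : ℤ, t < c → y t = a := by intro t ht; simp [hy, ht]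
  have hyb : ∀ t : ℤ, c ≤ t → y t = b := by
    intro t ht; simp [hy, not_lt.2 ht]
  have hLc : L c = 0 := by
    rw [hL]
    simp only
    have h1 : ∑ t ∈ Finset.Icc 1 (c - 1), (y t - segMean y 1 (c - 1)) ^ 2 = 0 :=
      seg_const_sq_zero y 1 (c - 1) a (by omega)
        (fun t ht => hya t (by have := Finset.mem_Icc.1 ht; omega))
    have h2 : ∑ t ∈ Finset.Icc c T, (y t - segMean y c T) ^ 2 = 0 :=
      seg_const_sq_zero y c T b (by omega)
        (fun t ht => hyb t (Finset.mem_Icc.1 ht).1)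
    rw [h1, h2]; ring
  rw [hLc, hL]
  simp only
  have hnn1 : (0:ℝ) ≤ ∑ t ∈ Finset.Icc 1 (τ - 1), (y t - segMean y 1 (τ - 1)) ^ 2 :=
    Finset.sum_nonneg fun t _ => sq_nonneg _
  have hnn2 : (0:ℝ) ≤ ∑ t ∈ Finset.Icc τ T, (y t - segMean y τ T) ^ 2 :=
    Finset.sum_nonneg fun t _ => sq_nonneg _
  rcases lt_or_gt_of_ne hτc with hlt | hgt
  · -- τ < c : right segment [τ, T] contains τ (value a) and c (value b)
    have hmem1 : τ ∈ Finset.Icc τ T := Finset.mem_Icc.2 ⟨le_refl _, hτT⟩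
    have hmem2 : c ∈ Finset.Icc τ T := Finset.mem_Icc.2 ⟨le_of_lt hlt, by omega⟩
    have hvne : y τ ≠ y c := by
      rw [hya τ hlt, hyb c (le_refl c)]; exact hab
    have := seg_two_pos y (Finset.Icc τ T) (segMean y τ T) τ c hmem1 hmem2 hvne
    linarith
  · -- τ > c : left segment [1, τ-1] contains 1 (value a) and c (value b)
    have hmem1 : (1:ℤ) ∈ Finset.Icc 1 (τ - 1) := Finset.mem_Icc.2 ⟨le_refl _, by omega⟩
    have hmem2 : c ∈ Finset.Icc 1 (τ - 1) := Finset.mem_Icc.2 ⟨by omega, by omega⟩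
    have hvne : y 1 ≠ y c := by
      rw [hya 1 (by omega), hyb c (le_refl c)]; exact hab
    have := seg_two_pos y (Finset.Icc 1 (τ - 1)) (segMean y 1 (τ - 1)) 1 c hmem1 hmem2 hvne
    linarith
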